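/- Under the hypotheses of the previous statement (empty circumsphere for S), for any feasible x (nonnegative, summing to 1, Σ_j x_j a_j = y) we have Σ_j x_j ‖y - a_j‖² ≥ r² - ‖y - c‖², with equality if and only if supp(x) ⊆ S. -/

import Mathlib

theorem stmt_12 {d m : ℕ} (a : Fin m → EuclideanSpace ℝ (Fin d))
    (S : Finset (Fin m)) (c : EuclideanSpace ℝ (Fin d)) (r : ℝ) (hr : 0 < r)
    (hin : ∀ j ∈ S, ‖a j - c‖ = r) (hout : ∀ j ∉ S, r < ‖a j - c‖)
    (y : EuclideanSpace ℝ (Fin d))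
    (hy : ∃ w : Fin m → ℝ, (∀ j, 0 ≤ w j) ∧ (∀ j, w j ≠ 0 → j ∈ S) ∧
      ∑ j, w j = 1 ∧ ∑ j, w j • a j = y)
    (x : Fin m → ℝ)
    (hx0 : ∀ j, 0 ≤ x j) (hxs : ∑ j, x j = 1) (hxy : ∑ j, x j • a j = y) :
    r ^ 2 - ‖y - c‖ ^ 2 ≤ ∑ j, x j * ‖y - a j‖ ^ 2 ∧
      (∑ j, x j * ‖y - a j‖ ^ 2 = r ^ 2 - ‖y - c‖ ^ 2 ↔ ∀ j, x j ≠ 0 → j ∈ S) := by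
  have hyc : ∑ j, x j • (a j - c) = y - c := by
    simp only [smul_sub]
    rw [Finset.sum_sub_distrib, hxy, ← Finset.sum_smul, hxs, one_smul]
  have hinner : ∑ j, x j * (inner ℝ (y - c) (a j - c) : ℝ) = ‖y - c‖ ^ 2 := by
    have h := inner_sum (𝕜 := ℝ) Finset.univ (fun j => x j • (a j - c)) (y - c)
    rw [hyc] at h
    simp only [real_inner_smul_right] at h
    rw [← h, real_inner_self_eq_norm_sq]
  have key : ∑ j, x j * ‖y - a j‖ ^ 2 = (∑ j, x j * ‖a j - c‖ ^ 2) - ‖y - c‖ ^ 2 := by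
    have h1 : ∀ j, ‖y - a j‖ ^ 2
        = ‖y - c‖ ^ 2 - 2 * (inner ℝ (y - c) (a j - c) : ℝ) + ‖a j - c‖ ^ 2 := by
      intro j
      have h2 : y - a j = (y - c) - (a j - c) := by abel
      rw [h2, @norm_sub_sq_real]
    calc ∑ j, x j * ‖y - a j‖ ^ 2
        = ∑ j, (x j * ‖y - c‖ ^ 2 - 2 * (x j * (inner ℝ (y - c) (a j - c) : ℝ))
            + x j * ‖a j - c‖ ^ 2) := by
          apply Finset.sum_congr rfl; intro j _; rw [h1 j]; ring
      _ = (∑ j, x j) * ‖y - c‖ ^ 2 - 2 * ∑ j, x j * (inner ℝ (y - c) (a j - c) : ℝ)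
            + ∑ j, x j * ‖a j - c‖ ^ 2 := by
          rw [Finset.sum_add_distrib, Finset.sum_sub_distrib, ← Finset.mul_sum,
            ← Finset.sum_mul]
      _ = _ := by rw [hxs, hinner]; ring
  have hterm : ∀ j, 0 ≤ x j * (‖a j - c‖ ^ 2 - r ^ 2) := by
    intro j
    apply mul_nonneg (hx0 j)
    by_cases hj : j ∈ S
    · rw [hin j hj]; ring_nf; simp
    · have := hout j hj
      nlinarith [norm_nonneg (a j - c)]
  have hsum : ∑ j, x j * (‖a j - c‖ ^ 2 - r ^ 2)
      = ∑ j, x j * ‖a j - c‖ ^ 2 - r ^ 2 := by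
    simp only [mul_sub]
    rw [Finset.sum_sub_distrib, ← Finset.sum_mul, hxs, one_mul]
  have hge : r ^ 2 ≤ ∑ j, x j * ‖a j - c‖ ^ 2 := by
    have : (0:ℝ) ≤ ∑ j, x j * (‖a j - c‖ ^ 2 - r ^ 2) := Finset.sum_nonneg (fun j _ => hterm j)
    rw [hsum] at this; linarith
  constructor
  · rw [key]; linarith
  · rw [key]
    constructor
    · intro h j hxj
      by_contra hj
      have h0 : ∑ j, x j * (‖a j - c‖ ^ 2 - r ^ 2) = 0 := by rw [hsum]; linarith
      have hz := (Finset.sum_eq_zero_iff_of_nonneg (fun j _ => hterm j)).mp h0 j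
        (Finset.mem_univ j)
      have hpos : 0 < ‖a j - c‖ ^ 2 - r ^ 2 := by
        have := hout j hj; nlinarith
      have := mul_pos (lt_of_le_of_ne (hx0 j) (Ne.symm hxj)) hpos
      linarith
    · intro h
      have h0 : ∑ j, x j * (‖a j - c‖ ^ 2 - r ^ 2) = 0 := by
        apply Finset.sum_eq_zero
        intro j _
        by_cases hxj : x j = 0
        · rw [hxj]; ring
        · rw [hin j (h j hxj)]; ring
      rw [hsum] at h0; linarith
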